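/- Let p ∈ ℂ be nonzero. The ℂ-vector space with basis {L_{i,m} : i ∈ ℤ≥0, m ∈ ℤ≥-1} equipped with the bracket [L_{i,m}, L_{j,n}] = ((j+p)(m+1) - (i+p)(n+1)) L_{i+j, m+n} is a Lie algebra (the bracket is alternating and satisfies the Jacobi identity). -/

import Mathlib

/-- The underlying space of the annihilation algebra `A(B(p))`: formal `ℂ`-linear
combinations of the symbols `L_{i,m}` with `i ∈ ℤ≥0`, `m ∈ ℤ` (only those with
`m ≥ -1` are used). -/
abbrev AnnAlg := (ℕ × ℤ) →₀ ℂ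

/-- Structure constant: `[L_{i,m}, L_{j,n}] = ((j+p)(m+1) - (i+p)(n+1)) L_{i+j,m+n}`.
When `m = n = -1` this coefficient vanishes, so the result never involves `m+n < -1`. -/
noncomputable def annCoeff (p : ℂ) (a b : ℕ × ℤ) : ℂ :=
  ((b.1 : ℂ) + p) * ((a.2 : ℂ) + 1) - ((a.1 : ℂ) + p) * ((b.2 : ℂ) + 1)

/-- The bracket on `A(B(p))`, extended bilinearly from the basis. -/
noncomputable def annBracket (p : ℂ) (x y : AnnAlg) : AnnAlg :=
  x.sum fun a ca => y.sum fun b cb =>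
    (ca * cb * annCoeff p a b) • Finsupp.single (a.1 + b.1, a.2 + b.2) (1 : ℂ)

/-- An element of `AnnAlg` is supported on the allowed basis `{L_{i,m} : m ≥ -1}`. -/
lemma bz_left (p : ℂ) (y : AnnAlg) : annBracket p 0 y = 0 := by
  simp [annBracket]

lemma bz_right (p : ℂ) (x : AnnAlg) : annBracket p x 0 = 0 := by
  simp [annBracket]

lemma badd_left (p : ℂ) (x x' y : AnnAlg) :
    annBracket p (x + x') y = annBracket p x y + annBracket p x' y := by
  unfold annBracket
  rw [Finsupp.sum_add_index']
  · intro a; simp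
  · intro a c1 c2
    rw [← Finsupp.sum_add]
    congr 1; ext b cb
    rw [add_mul, add_mul, add_smul]

lemma badd_right (p : ℂ) (x y y' : AnnAlg) :
    annBracket p x (y + y') = annBracket p x y + annBracket p x y' := by
  unfold annBracket
  rw [← Finsupp.sum_add]
  congr 1; ext a ca
  rw [Finsupp.sum_add_index']
  · intro b; simp
  · intro b c1 c2
    simp [mul_add, add_mul, add_smul]

lemma bsingle (p : ℂ) (a b : ℕ × ℤ) (ca cb : ℂ) :
    annBracket p (Finsupp.single a ca) (Finsupp.single b cb)
      = (ca * cb * annCoeff p a b) • Finsupp.single (a.1 + b.1, a.2 + b.2) (1 : ℂ) := by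
  unfold annBracket
  rw [Finsupp.sum_single_index, Finsupp.sum_single_index]
  · simp
  · simp [Finsupp.sum_single_index]

lemma banti (p : ℂ) (x y : AnnAlg) : annBracket p x y = - annBracket p y x := by
  induction x using Finsupp.induction_linear generalizing y with
  | zero => simp [bz_left, bz_right]
  | add f g hf hg => rw [badd_left, badd_right, hf, hg]; abel
  | single a ca =>
    induction y using Finsupp.induction_linear with
    | zero => simp [bz_left, bz_right]
    | add f g hf hg => rw [badd_left, badd_right, hf, hg]; abel
    | single b cb =>
      rw [bsingle, bsingle, add_comm b.1 a.1, add_comm b.2 a.2, ← neg_smul]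
      congr 1
      simp only [annCoeff]
      ring

lemma jac_single (p : ℂ) (a b c : ℕ × ℤ) (ca cb cc : ℂ) :
    annBracket p (Finsupp.single a ca)
        (annBracket p (Finsupp.single b cb) (Finsupp.single c cc))
      = annBracket p (annBracket p (Finsupp.single a ca) (Finsupp.single b cb))
          (Finsupp.single c cc)
        + annBracket p (Finsupp.single b cb)
            (annBracket p (Finsupp.single a ca) (Finsupp.single c cc)) := by
  rw [bsingle (a := b) (b := c), bsingle (a := a) (b := b), bsingle (a := a) (b := c),
    Finsupp.smul_single', mul_one, Finsupp.smul_single', mul_one,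
    Finsupp.smul_single', mul_one, bsingle, bsingle, bsingle]
  have e1 : ((a.1 + (b.1 + c.1), a.2 + (b.2 + c.2)) : ℕ × ℤ)
      = (a.1 + b.1 + c.1, a.2 + b.2 + c.2) := by
    simp [Prod.ext_iff]; omega
  have e3 : ((b.1 + (a.1 + c.1), b.2 + (a.2 + c.2)) : ℕ × ℤ)
      = (a.1 + b.1 + c.1, a.2 + b.2 + c.2) := by
    simp [Prod.ext_iff]; constructor <;> omega
  rw [e1, e3, ← add_smul]
  congr 1
  simp only [annCoeff]
  push_cast
  ring

lemma jac (p : ℂ) (x y z : AnnAlg) :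
    annBracket p x (annBracket p y z)
      = annBracket p (annBracket p x y) z + annBracket p y (annBracket p x z) := by
  induction x using Finsupp.induction_linear generalizing y z with
  | zero => simp [bz_left, bz_right]
  | add f g hf hg =>
      simp only [badd_left, badd_right, hf, hg]; abel
  | single a ca =>
    induction y using Finsupp.induction_linear generalizing z with
    | zero => simp [bz_left, bz_right]
    | add f g hf hg =>
        simp only [badd_left, badd_right, hf, hg]; abel
    | single b cb =>
      induction z using Finsupp.induction_linear with
      | zero => simp [bz_left, bz_right]
      | add f g hf hg =>
          simp only [badd_left, badd_right, hf, hg]; abel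
      | single c cc => exact jac_single p a b c ca cb cc

lemma supp_closed (p : ℂ) (x y : AnnAlg) (hx : ∀ a ∈ x.support, (-1 : ℤ) ≤ a.2)
    (hy : ∀ a ∈ y.support, (-1 : ℤ) ≤ a.2) :
    ∀ a ∈ (annBracket p x y).support, (-1 : ℤ) ≤ a.2 := by
  intro k hk
  unfold annBracket at hk
  have h1 := Finsupp.support_sum hk
  obtain ⟨a, ha, h2⟩ := Finset.mem_biUnion.mp h1
  have h3 := Finsupp.support_sum h2
  obtain ⟨b, hb, h4⟩ := Finset.mem_biUnion.mp h3
  have h5 := Finsupp.support_smul h4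
  have h6 := Finsupp.support_single_subset h5
  simp only [Finset.mem_singleton] at h6
  subst h6
  have hna : (-1 : ℤ) ≤ a.2 := hx a ha
  have hnb : (-1 : ℤ) ≤ b.2 := hy b hb
  by_contra hlt
  push_neg at hlt
  have ha2 : a.2 = -1 := by omega
  have hb2 : b.2 = -1 := by omega
  have : annCoeff p a b = 0 := by
    simp [annCoeff, ha2, hb2]
  rw [this, mul_zero, zero_smul] at h4
  simp at h4
def AnnSupported (x : AnnAlg) : Prop := ∀ a ∈ x.support, (-1 : ℤ) ≤ a.2

/-- The bracket `[L_{i,m}, L_{j,n}] = ((j+p)(m+1) - (i+p)(n+1)) L_{i+j,m+n}` on the span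
of `{L_{i,m} : i ≥ 0, m ≥ -1}` makes it a Lie algebra: the bracket is bilinear by
construction, preserves the span, is alternating, and satisfies the Jacobi identity. -/
theorem annihilation_is_lie_algebra (p : ℂ) (hp : p ≠ 0) :
    (∀ x y : AnnAlg, AnnSupported x → AnnSupported y → AnnSupported (annBracket p x y)) ∧
    (∀ x : AnnAlg, AnnSupported x → annBracket p x x = 0) ∧
    (∀ x y z : AnnAlg, AnnSupported x → AnnSupported y → AnnSupported z →
      annBracket p x (annBracket p y z)
        = annBracket p (annBracket p x y) z + annBracket p y (annBracket p x z)) := by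
  refine ⟨fun x y hx hy => supp_closed p x y hx hy, fun x _ => ?_, fun x y z _ _ _ => jac p x y z⟩
  have h := banti p x x
  have h2 : (2 : ℂ) • annBracket p x x = 0 := by
    rw [two_smul]; nth_rewrite 2 [h]; simp
  rcases smul_eq_zero.mp h2 with h3 | h3
  · norm_num at h3
  · exact h3
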